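/- Let Φ be a quantum channel (completely positive trace-preserving linear map) on density operators of ℂ^d, and let S denote von Neumann entropy. Suppose ρ* is a density operator with Tr(ρ* H) = N minimizing S(Φ(ρ)) over all density operators ρ with Tr(ρH) = N, where H is self-adjoint. Then there exists a pure state |ψ⟩⟨ψ| with ⟨ψ|H|ψ⟩ = N and S(Φ(|ψ⟩⟨ψ|)) ≤ S(Φ(ρ*)). Hence the constrained minimum output entropy is achieved on pure states. -/

import Mathlib

open Matrix
open scoped ComplexOrder

/-- Von Neumann entropy (in bits) of a matrix, via the eigenvalues of a Hermitian matrix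
(junk value `0` for non-Hermitian matrices). -/
noncomputable def vNEntropy {d : ℕ} (σ : Matrix (Fin d) (Fin d) ℂ) : ℝ :=
  if h : σ.IsHermitian then (∑ i, Real.negMulLog (h.eigenvalues i)) / Real.log 2 else 0

private lemma psd_smul {n : ℕ} {M : Matrix (Fin n) (Fin n) ℂ} (hM : M.PosSemidef) {r : ℝ}
    (hr : 0 ≤ r) : ((r : ℂ) • M).PosSemidef := by
  rw [posSemidef_iff_dotProduct_mulVec]
  constructor
  · unfold Matrix.IsHermitian
    rw [conjTranspose_smul, hM.1.eq]
    norm_num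
  · intro x
    rw [smul_mulVec, dotProduct_smul]
    exact smul_nonneg (by positivity) (hM.dotProduct_mulVec_nonneg x)

private lemma psd_outer {n : ℕ} (v : Fin n → ℂ) : (vecMulVec v (star v)).PosSemidef := by
  rw [posSemidef_iff_dotProduct_mulVec]
  constructor
  · ext i j
    simp [vecMulVec_apply, conjTranspose_apply, mul_comm]
  · intro x
    have : star x ⬝ᵥ vecMulVec v (star v) *ᵥ x = star (star v ⬝ᵥ x) * (star v ⬝ᵥ x) := by
      simp only [dotProduct, mulVec, vecMulVec_apply, star_sum, star_mul', star_star,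
        Finset.mul_sum, Finset.sum_mul, Pi.star_apply]
      rw [Finset.sum_comm]
      congr 1; ext a; congr 1; ext b; ring
    rw [this]
    exact star_mul_self_nonneg _

private lemma psd_sum {n m : ℕ} (M : Fin m → Matrix (Fin n) (Fin n) ℂ)
    (h : ∀ k, (M k).PosSemidef) : (∑ k, M k).PosSemidef := by
  classical
  refine Finset.sum_induction M _ (fun a b ha hb => ha.add hb) ?_ (fun k _ => h k)
  exact ⟨isHermitian_zero, fun x => by simp⟩

private lemma colsum {n : ℕ} {W : Matrix (Fin n) (Fin n) ℂ} (h : Wᴴ * W = 1) (i : Fin n) :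
    ∑ j, Complex.normSq (W j i) = 1 := by
  have h1 : (Wᴴ * W) i i = 1 := by rw [h]; simp
  rw [Matrix.mul_apply] at h1
  have h2 : ∀ j, (Wᴴ) i j * W j i = ((Complex.normSq (W j i) : ℝ) : ℂ) := fun j => by
    rw [Matrix.conjTranspose_apply, Complex.normSq_eq_conj_mul_self, Complex.star_def]
  rw [Finset.sum_congr rfl (fun j _ => h2 j)] at h1
  exact_mod_cast h1

private lemma entdiag {n : ℕ} {σ : Matrix (Fin n) (Fin n) ℂ}
    (hσ : σ.PosSemidef) (U : Matrix (Fin n) (Fin n) ℂ) (hU : U ∈ Matrix.unitaryGroup (Fin n) ℂ) :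
    ∑ i, Real.negMulLog (hσ.1.eigenvalues i) ≤ ∑ i, Real.negMulLog ((Uᴴ * σ * U) i i).re := by
  classical
  set lam := hσ.1.eigenvalues with hlam
  set V : Matrix (Fin n) (Fin n) ℂ := (hσ.1.eigenvectorUnitary : Matrix (Fin n) (Fin n) ℂ) with hV
  set W : Matrix (Fin n) (Fin n) ℂ := Vᴴ * U with hW
  have hWmem : W ∈ Matrix.unitaryGroup (Fin n) ℂ :=
    mul_mem (Unitary.star_mem hσ.1.eigenvectorUnitary.2) hU
  have hWcol : ∀ i, ∑ j, Complex.normSq (W j i) = 1 := by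
    intro i
    refine colsum ?_ i
    have := Matrix.mem_unitaryGroup_iff'.mp hWmem
    rwa [Matrix.star_eq_conjTranspose] at this
  have hWrow : ∀ j, ∑ i, Complex.normSq (W j i) = 1 := by
    intro j
    have h1 : ∑ i, Complex.normSq ((Wᴴ) i j) = 1 := by
      refine colsum ?_ j
      rw [Matrix.conjTranspose_conjTranspose]
      have := Matrix.mem_unitaryGroup_iff.mp hWmem
      rwa [Matrix.star_eq_conjTranspose] at this
    simpa [Matrix.conjTranspose_apply, Complex.normSq_conj] using h1
  have hlam0 : ∀ j, 0 ≤ lam j := fun j => hσ.eigenvalues_nonneg j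
  have key : ∀ i, ((Uᴴ * σ * U) i i).re = ∑ j, Complex.normSq (W j i) * lam j := by
    intro i
    have hσspec : σ = V * (Matrix.diagonal (Complex.ofReal ∘ lam) : Matrix (Fin n) (Fin n) ℂ)
        * Vᴴ := by
      have := hσ.1.spectral_theorem
      rwa [Unitary.conjStarAlgAut_apply, Matrix.star_eq_conjTranspose] at this
    have hXW : Uᴴ * σ * U
        = Wᴴ * ((Matrix.diagonal (Complex.ofReal ∘ lam) : Matrix (Fin n) (Fin n) ℂ) * W) := by
      rw [hσspec, hW]
      simp only [Matrix.conjTranspose_mul, Matrix.conjTranspose_conjTranspose]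
      noncomm_ring
    rw [hXW, Matrix.mul_apply]
    have h2 : ∀ j, (Wᴴ) i j
        * ((Matrix.diagonal (Complex.ofReal ∘ lam) : Matrix (Fin n) (Fin n) ℂ) * W) j i
        = ((Complex.normSq (W j i) * lam j : ℝ) : ℂ) := by
      intro j
      rw [Matrix.diagonal_mul, Matrix.conjTranspose_apply]
      simp only [Function.comp_apply, Complex.star_def]
      push_cast [Complex.normSq_eq_conj_mul_self]
      ring
    rw [Finset.sum_congr rfl (fun j _ => h2 j)]
    rw [← Complex.ofReal_sum]
    simp
  calc ∑ j, Real.negMulLog (lam j)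
      = ∑ j, (∑ i, Complex.normSq (W j i)) * Real.negMulLog (lam j) := by
        simp [hWrow]
    _ = ∑ i, ∑ j, Complex.normSq (W j i) * Real.negMulLog (lam j) := by
        rw [Finset.sum_comm]
        simp [Finset.sum_mul]
    _ ≤ ∑ i, Real.negMulLog (∑ j, Complex.normSq (W j i) * lam j) := by
        refine Finset.sum_le_sum fun i _ => ?_
        have := Real.concaveOn_negMulLog.le_map_sum (t := Finset.univ)
          (w := fun j => Complex.normSq (W j i)) (p := lam)
          (fun j _ => Complex.normSq_nonneg _) (hWcol i) (fun j _ => hlam0 j)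
        simpa [smul_eq_mul] using this
    _ = ∑ i, Real.negMulLog ((Uᴴ * σ * U) i i).re := by simp [key]

private lemma psd_diag_re_nonneg {n : ℕ} {M : Matrix (Fin n) (Fin n) ℂ} (hM : M.PosSemidef)
    (i : Fin n) : 0 ≤ (M i i).re := by
  have h := hM.dotProduct_mulVec_nonneg (Pi.single i 1)
  have h2 : star (Pi.single i 1 : Fin n → ℂ) ⬝ᵥ M *ᵥ Pi.single i 1 = M i i := by
    simp [Matrix.mulVec_single, dotProduct, Pi.single_apply, Finset.sum_ite_eq,
      apply_ite (starRingEnd ℂ)]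
  rw [h2] at h
  exact (Complex.le_def.mp h).1

private lemma ent_pair {n : ℕ} {A B : Matrix (Fin n) (Fin n) ℂ}
    (hA : A.PosSemidef) (hB : B.PosSemidef) {p : ℝ} (hp0 : 0 ≤ p) (hp1 : p ≤ 1)
    (hC : ((p : ℂ) • A + ((1 - p : ℝ) : ℂ) • B).PosSemidef) :
    p * (∑ i, Real.negMulLog (hA.1.eigenvalues i))
      + (1 - p) * (∑ i, Real.negMulLog (hB.1.eigenvalues i))
      ≤ ∑ i, Real.negMulLog (hC.1.eigenvalues i) := by
  classical
  set C := (p : ℂ) • A + ((1 - p : ℝ) : ℂ) • B with hCdef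
  set U : Matrix (Fin n) (Fin n) ℂ := (hC.1.eigenvectorUnitary : Matrix (Fin n) (Fin n) ℂ) with hU
  have hUmem : U ∈ Matrix.unitaryGroup (Fin n) ℂ := hC.1.eigenvectorUnitary.2
  have hdiagC : Uᴴ * C * U = Matrix.diagonal (Complex.ofReal ∘ hC.1.eigenvalues) := by
    have := hC.1.conjStarAlgAut_star_eigenvectorUnitary
    rwa [Unitary.conjStarAlgAut_star_apply, Matrix.star_eq_conjTranspose] at this
  have heig : ∀ i, hC.1.eigenvalues i = p * ((Uᴴ * A * U) i i).re
      + (1 - p) * ((Uᴴ * B * U) i i).re := by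
    intro i
    have h1 : (Uᴴ * C * U) i i = (hC.1.eigenvalues i : ℂ) := by
      rw [hdiagC]; simp
    have h2 : Uᴴ * C * U = (p : ℂ) • (Uᴴ * A * U) + ((1 - p : ℝ) : ℂ) • (Uᴴ * B * U) := by
      rw [hCdef]
      simp only [Matrix.mul_add, Matrix.add_mul, Matrix.mul_smul, Matrix.smul_mul]
    rw [h2] at h1
    have := congrArg Complex.re h1
    simpa [Complex.add_re, Complex.mul_re] using this.symm
  have hAre : ∀ i, 0 ≤ ((Uᴴ * A * U) i i).re :=
    fun i => psd_diag_re_nonneg (hA.conjTranspose_mul_mul_same U) i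
  have hBre : ∀ i, 0 ≤ ((Uᴴ * B * U) i i).re :=
    fun i => psd_diag_re_nonneg (hB.conjTranspose_mul_mul_same U) i
  calc p * (∑ i, Real.negMulLog (hA.1.eigenvalues i))
        + (1 - p) * (∑ i, Real.negMulLog (hB.1.eigenvalues i))
      ≤ p * (∑ i, Real.negMulLog ((Uᴴ * A * U) i i).re)
        + (1 - p) * (∑ i, Real.negMulLog ((Uᴴ * B * U) i i).re) := by
        have h1 := entdiag hA U hUmem
        have h2 := entdiag hB U hUmem
        have := mul_le_mul_of_nonneg_left h1 hp0
        have := mul_le_mul_of_nonneg_left h2 (by linarith : (0:ℝ) ≤ 1 - p)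
        linarith
    _ = ∑ i, (p * Real.negMulLog ((Uᴴ * A * U) i i).re
        + (1 - p) * Real.negMulLog ((Uᴴ * B * U) i i).re) := by
        rw [Finset.sum_add_distrib, Finset.mul_sum, Finset.mul_sum]
    _ ≤ ∑ i, Real.negMulLog (hC.1.eigenvalues i) := by
        refine Finset.sum_le_sum fun i _ => ?_
        rw [heig i]
        have := Real.concaveOn_negMulLog.2 (Set.mem_Ici.mpr (hAre i)) (Set.mem_Ici.mpr (hBre i))
          hp0 (by linarith : (0:ℝ) ≤ 1 - p) (by ring)
        simpa [smul_eq_mul] using this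

private lemma vN_eq {d : ℕ} {σ : Matrix (Fin d) (Fin d) ℂ} (h : σ.IsHermitian) :
    vNEntropy σ = (∑ i, Real.negMulLog (h.eigenvalues i)) / Real.log 2 := by
  rw [vNEntropy, dif_pos h]

private lemma vN_pair {n : ℕ} {A B : Matrix (Fin n) (Fin n) ℂ}
    (hA : A.PosSemidef) (hB : B.PosSemidef) {p : ℝ} (hp0 : 0 ≤ p) (hp1 : p ≤ 1)
    (hC : ((p : ℂ) • A + ((1 - p : ℝ) : ℂ) • B).PosSemidef) :
    p * vNEntropy A + (1 - p) * vNEntropy B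
      ≤ vNEntropy ((p : ℂ) • A + ((1 - p : ℝ) : ℂ) • B) := by
  rw [vN_eq hA.1, vN_eq hB.1, vN_eq hC.1]
  have hlog : (0:ℝ) < Real.log 2 := Real.log_pos (by norm_num)
  have := ent_pair hA hB hp0 hp1 hC
  rw [← mul_div_assoc, ← mul_div_assoc, ← add_div]
  exact (div_le_div_iff_of_pos_right hlog).mpr this

theorem stmt_9 (d : ℕ) (Φ : Matrix (Fin d) (Fin d) ℂ → Matrix (Fin d) (Fin d) ℂ)
    (H : Matrix (Fin d) (Fin d) ℂ) (hH : H.IsHermitian) (N : ℝ)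
    -- Φ is completely positive: it admits a Kraus representation
    (hCP : ∃ (m : ℕ) (E : Fin m → Matrix (Fin d) (Fin d) ℂ),
      ∀ ρ, Φ ρ = ∑ k, E k * ρ * (E k)ᴴ)
    -- Φ is trace preserving
    (hTP : ∀ ρ, (Φ ρ).trace = ρ.trace)
    (ρstar : Matrix (Fin d) (Fin d) ℂ) (hρ : ρstar.PosSemidef) (htr : ρstar.trace = 1)
    (hE : (ρstar * H).trace = (N : ℂ))
    -- ρstar minimizes the output entropy over constrained density operators
    (hmin : ∀ ρ : Matrix (Fin d) (Fin d) ℂ, ρ.PosSemidef → ρ.trace = 1 →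
      (ρ * H).trace = (N : ℂ) → vNEntropy (Φ ρstar) ≤ vNEntropy (Φ ρ)) :
    ∃ ψ : Fin d → ℂ,
      (∑ j, Complex.normSq (ψ j) = 1) ∧
      (∑ i, ∑ j, (starRingEnd ℂ) (ψ i) * H i j * ψ j = (N : ℂ)) ∧
      vNEntropy (Φ (Matrix.vecMulVec ψ (star ψ))) ≤ vNEntropy (Φ ρstar) := by
  classical
  obtain ⟨m, E, hK⟩ := hCP
  -- Φ preserves positive semidefiniteness
  have hΦpsd : ∀ σ : Matrix (Fin d) (Fin d) ℂ, σ.PosSemidef → (Φ σ).PosSemidef := by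
    intro σ hσ
    rw [hK]
    exact psd_sum _ (fun k => hσ.mul_mul_conjTranspose_same (E k))
  -- Φ is linear on the relevant combinations
  have hΦlin : ∀ (a b : ℂ) (X Y : Matrix (Fin d) (Fin d) ℂ),
      Φ (a • X + b • Y) = a • Φ X + b • Φ Y := by
    intro a b X Y
    rw [hK, hK, hK, Finset.smul_sum, Finset.smul_sum, ← Finset.sum_add_distrib]
    refine Finset.sum_congr rfl fun k _ => ?_
    simp only [Matrix.mul_add, Matrix.add_mul, Matrix.mul_smul, Matrix.smul_mul]
  -- The key extraction step
  have key : ∀ (ψ : Fin d → ℂ), (∑ j, Complex.normSq (ψ j) = 1) →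
      (∑ i, ∑ j, (starRingEnd ℂ) (ψ i) * H i j * ψ j = (N : ℂ)) →
      ∀ p : ℝ, 0 < p → p < 1 →
      (ρstar - (p : ℂ) • Matrix.vecMulVec ψ (star ψ)).PosSemidef →
      vNEntropy (Φ (Matrix.vecMulVec ψ (star ψ))) ≤ vNEntropy (Φ ρstar) := by
    intro ψ hnorm hq p hp0 hp1 hPSD
    set P := Matrix.vecMulVec ψ (star ψ) with hPdef
    have hPpsd : P.PosSemidef := psd_outer ψ
    have htrP : P.trace = 1 := by
      have : P.trace = ((∑ j, Complex.normSq (ψ j) : ℝ) : ℂ) := by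
        rw [Matrix.trace]
        push_cast
        refine Finset.sum_congr rfl fun a _ => ?_
        simp [hPdef, Matrix.diag, vecMulVec_apply, Complex.mul_conj]
      rw [this, hnorm]
      norm_num
    have htrPH : (P * H).trace = (N : ℂ) := by
      have h1 : (P * H).trace = ∑ a, ∑ b, ψ a * ((starRingEnd ℂ) (ψ b) * H b a) := by
        simp [Matrix.trace, Matrix.diag, hPdef, Matrix.mul_apply, vecMulVec_apply,
          Pi.star_apply, Complex.star_def, mul_assoc]
      rw [h1, Finset.sum_comm, ← hq]
      exact Finset.sum_congr rfl fun i _ => Finset.sum_congr rfl fun j _ => by ring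
    have h1p : (0:ℝ) < 1 - p := by linarith
    set ρ' := (((1 - p)⁻¹ : ℝ) : ℂ) • (ρstar - (p : ℂ) • P) with hρ'def
    have hρ'psd : ρ'.PosSemidef := psd_smul hPSD (le_of_lt (inv_pos.mpr h1p))
    have hρ'tr : ρ'.trace = 1 := by
      rw [hρ'def, Matrix.trace_smul, Matrix.trace_sub, Matrix.trace_smul, htr, htrP]
      have hne' : (1 : ℂ) - (p : ℂ) ≠ 0 := by
        intro hcon
        have : ((1 - p : ℝ) : ℂ) = 0 := by push_cast; linear_combination hcon
        exact h1p.ne' (by exact_mod_cast this)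
      rw [smul_eq_mul, smul_eq_mul]
      push_cast
      field_simp
    have hρ'H : (ρ' * H).trace = (N : ℂ) := by
      rw [hρ'def, Matrix.smul_mul, Matrix.trace_smul, Matrix.sub_mul, Matrix.trace_sub,
        Matrix.smul_mul, Matrix.trace_smul, hE, htrPH]
      have hne' : (1 : ℂ) - (p : ℂ) ≠ 0 := by
        intro hcon
        have : ((1 - p : ℝ) : ℂ) = 0 := by push_cast; linear_combination hcon
        exact h1p.ne' (by exact_mod_cast this)
      rw [smul_eq_mul, smul_eq_mul]
      push_cast
      field_simp
    have hdecomp : Φ ρstar = (p : ℂ) • Φ P + ((1 - p : ℝ) : ℂ) • Φ ρ' := by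
      have h2 : ρstar = (p : ℂ) • P + ((1 - p : ℝ) : ℂ) • ρ' := by
        rw [hρ'def, smul_smul]
        have : ((1 - p : ℝ) : ℂ) * (((1 - p)⁻¹ : ℝ) : ℂ) = 1 := by
          rw [← Complex.ofReal_mul, mul_inv_cancel₀ h1p.ne', Complex.ofReal_one]
        rw [this, one_smul]
        abel
      calc Φ ρstar = Φ ((p : ℂ) • P + ((1 - p : ℝ) : ℂ) • ρ') := by rw [← h2]
        _ = (p : ℂ) • Φ P + ((1 - p : ℝ) : ℂ) • Φ ρ' := hΦlin _ _ _ _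
    have hcon := vN_pair (hΦpsd P hPpsd) (hΦpsd ρ' hρ'psd) hp0.le hp1.le
      (by rw [← hdecomp]; exact hΦpsd _ hρ)
    rw [← hdecomp] at hcon
    have hm := hmin ρ' hρ'psd hρ'tr hρ'H
    nlinarith [mul_le_mul_of_nonneg_left hm (le_of_lt h1p)]
  -- spectral setup
  have hHerm := hρ.1
  set U : Matrix (Fin d) (Fin d) ℂ := (hHerm.eigenvectorUnitary : Matrix (Fin d) (Fin d) ℂ)
    with hUdef
  set lam := hHerm.eigenvalues with hlamdef
  have hlam0 : ∀ k, 0 ≤ lam k := fun k => hρ.eigenvalues_nonneg k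
  have hUmem : U ∈ Matrix.unitaryGroup (Fin d) ℂ := hHerm.eigenvectorUnitary.2
  have hUsU : Uᴴ * U = 1 := by
    have := Matrix.mem_unitaryGroup_iff'.mp hUmem
    rwa [Matrix.star_eq_conjTranspose] at this
  have hspec : ρstar = U * (Matrix.diagonal (Complex.ofReal ∘ lam) : Matrix (Fin d) (Fin d) ℂ)
      * Uᴴ := by
    have := hHerm.spectral_theorem
    rwa [Unitary.conjStarAlgAut_apply, Matrix.star_eq_conjTranspose] at this
  set G := Uᴴ * H * U with hGdef
  have hGherm : G.IsHermitian := by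
    unfold Matrix.IsHermitian
    rw [hGdef]
    simp only [Matrix.conjTranspose_mul, Matrix.conjTranspose_conjTranspose, hH.eq]
    noncomm_ring
  set e := fun k => (G k k).re with hedef
  have hGkk : ∀ k, G k k = ((e k : ℝ) : ℂ) := by
    intro k
    have := hGherm.coe_re_apply_self k
    simpa [hedef] using this.symm
  have hUcol : ∀ k l, (∑ a, (starRingEnd ℂ) (U a k) * U a l) = if k = l then 1 else 0 := by
    intro k l
    have h1 : (Uᴴ * U) k l = (1 : Matrix (Fin d) (Fin d) ℂ) k l := by rw [hUsU]
    rw [Matrix.mul_apply] at h1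
    simpa [Matrix.conjTranspose_apply, Complex.star_def, Matrix.one_apply] using h1
  -- trace identities
  have hsum1 : ∑ k, lam k = 1 := by
    have h1 : ρstar.trace = ∑ k, ((lam k : ℝ) : ℂ) := by
      rw [hspec, Matrix.trace_mul_cycle, hUsU, Matrix.one_mul, Matrix.trace_diagonal]
      simp
    rw [htr] at h1
    have : ((∑ k, lam k : ℝ) : ℂ) = 1 := by push_cast; rw [← h1]
    exact_mod_cast this
  have hsumE : ∑ k, lam k * e k = N := by
    have h1 : (ρstar * H).trace = ∑ k, ((lam k * e k : ℝ) : ℂ) := by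
      rw [hspec]
      have : U * (Matrix.diagonal (Complex.ofReal ∘ lam) : Matrix (Fin d) (Fin d) ℂ) * Uᴴ * H
          = U * (Matrix.diagonal (Complex.ofReal ∘ lam) : Matrix (Fin d) (Fin d) ℂ) * (Uᴴ * H) := by
        noncomm_ring
      rw [this, Matrix.trace_mul_cycle, ← hGdef, Matrix.trace]
      refine Finset.sum_congr rfl fun k _ => ?_
      rw [Matrix.diag_apply, Matrix.mul_diagonal, hGkk k]
      simp only [Function.comp_apply]
      push_cast
      ring
    rw [hE] at h1
    have h2 : ((∑ k, lam k * e k : ℝ) : ℂ) = ((N : ℝ) : ℂ) := by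
      push_cast
      push_cast at h1
      exact h1.symm
    exact_mod_cast h2
  -- eigendecomposition of ρstar as a sum of outer products
  have hrep : ρstar = ∑ r, ((lam r : ℝ) : ℂ) • Matrix.vecMulVec (fun a => U a r)
      (star (fun a => U a r)) := by
    rw [hspec]
    ext a b
    rw [Matrix.sum_apply]
    rw [Matrix.mul_apply]
    have h3 : ∀ r, (U * (Matrix.diagonal (Complex.ofReal ∘ lam) : Matrix (Fin d) (Fin d) ℂ)) a r
        * (Uᴴ) r b = ((lam r : ℝ) : ℂ) * (U a r * (starRingEnd ℂ) (U b r)) := by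
      intro r
      rw [Matrix.mul_diagonal, Matrix.conjTranspose_apply]
      simp only [Function.comp_apply, Complex.star_def]
      ring
    rw [Finset.sum_congr rfl fun r _ => h3 r]
    refine Finset.sum_congr rfl fun r _ => ?_
    simp [Matrix.vecMulVec_apply, Pi.star_apply, Complex.star_def]
  have hGapply : ∀ k l, G k l = ∑ a, ∑ b, (starRingEnd ℂ) (U a k) * H a b * U b l := by
    intro k l
    rw [hGdef]
    simp only [Matrix.mul_apply, Matrix.conjTranspose_apply, Complex.star_def,
      Finset.sum_mul, Finset.mul_sum]
    rw [Finset.sum_comm]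
  by_cases hcase : ∃ k, lam k ≠ 0 ∧ e k = N
  · -- Case A : an eigenvector satisfies the constraint
    obtain ⟨k, hk0, hkN⟩ := hcase
    have hlamk : 0 < lam k := lt_of_le_of_ne (hlam0 k) (Ne.symm hk0)
    set ψ : Fin d → ℂ := fun a => U a k with hψdef
    have hnorm : ∑ a, Complex.normSq (ψ a) = 1 := colsum hUsU k
    have hcons : ∑ a, ∑ b, (starRingEnd ℂ) (ψ a) * H a b * ψ b = (N : ℂ) := by
      rw [hψdef, ← hGapply k k, hGkk k, hkN]
    set p := min (lam k) (1/2 : ℝ) with hpdef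
    have hp0 : 0 < p := lt_min hlamk (by norm_num)
    have hp1 : p < 1 := lt_of_le_of_lt (min_le_right _ _) (by norm_num)
    have hps : ρstar - (p : ℂ) • Matrix.vecMulVec ψ (star ψ)
        = ∑ r, (((if r = k then lam r - p else lam r : ℝ)) : ℂ) •
          Matrix.vecMulVec (fun a => U a r) (star (fun a => U a r)) := by
      have h0 : (∑ r, (if r = k then (p:ℂ) else 0) •
          Matrix.vecMulVec (fun a => U a r) (star (fun a => U a r)))
          = (p : ℂ) • Matrix.vecMulVec ψ (star ψ) := by
        have h00 : ∀ r, (if r = k then (p:ℂ) else 0) •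
            Matrix.vecMulVec (fun a => U a r) (star (fun a => U a r))
            = if r = k then (p:ℂ) • Matrix.vecMulVec (fun a => U a r)
              (star (fun a => U a r)) else 0 := fun r => by split_ifs <;> simp
        rw [Finset.sum_congr rfl fun r _ => h00 r, Finset.sum_ite_eq' Finset.univ k]
        simp [hψdef]
      rw [hrep, ← h0, ← Finset.sum_sub_distrib]
      refine Finset.sum_congr rfl fun r _ => ?_
      rw [← sub_smul]
      congr 1
      split_ifs with h1
      · push_cast; ring
      · push_cast; ring
    have hPSD : (ρstar - (p : ℂ) • Matrix.vecMulVec ψ (star ψ)).PosSemidef := by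
      rw [hps]
      refine psd_sum _ fun r => psd_smul (psd_outer _) ?_
      split_ifs with h1
      · subst h1; have := min_le_left (lam r) (1/2 : ℝ); rw [← hpdef] at this; linarith
      · exact hlam0 r
    exact ⟨ψ, hnorm, hcons, key ψ hnorm hcons p hp0 hp1 hPSD⟩
  · -- Case B : no constrained eigenvector; interpolate between two eigenvectors
    push_neg at hcase
    have hex : ∃ k, lam k ≠ 0 := by
      by_contra hno
      push_neg at hno
      rw [Finset.sum_congr rfl fun k _ => hno k] at hsum1
      simp at hsum1
    have hi : ∃ i, lam i ≠ 0 ∧ e i < N := by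
      by_contra hno
      push_neg at hno
      have hlt : ∀ k, lam k * N ≤ lam k * e k := by
        intro k
        rcases eq_or_ne (lam k) 0 with h | h
        · simp [h]
        · exact mul_le_mul_of_nonneg_left (hno k h) (hlam0 k)
      obtain ⟨k0, hk0⟩ := hex
      have hstrict : lam k0 * N < lam k0 * e k0 := by
        have hpos : 0 < lam k0 := lt_of_le_of_ne (hlam0 k0) (Ne.symm hk0)
        have h2 : N < e k0 := lt_of_le_of_ne (hno k0 hk0) (Ne.symm (hcase k0 hk0))
        exact mul_lt_mul_of_pos_left h2 hpos
      have hsumlt : ∑ k, lam k * N < ∑ k, lam k * e k :=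
        Finset.sum_lt_sum (fun k _ => hlt k) ⟨k0, Finset.mem_univ k0, hstrict⟩
      rw [← Finset.sum_mul, hsum1, one_mul, hsumE] at hsumlt
      exact lt_irrefl _ hsumlt
    have hj : ∃ j, lam j ≠ 0 ∧ N < e j := by
      by_contra hno
      push_neg at hno
      have hlt : ∀ k, lam k * e k ≤ lam k * N := by
        intro k
        rcases eq_or_ne (lam k) 0 with h | h
        · simp [h]
        · exact mul_le_mul_of_nonneg_left (hno k h) (hlam0 k)
      obtain ⟨k0, hk0⟩ := hex
      have hstrict : lam k0 * e k0 < lam k0 * N := by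
        have hpos : 0 < lam k0 := lt_of_le_of_ne (hlam0 k0) (Ne.symm hk0)
        have h2 : e k0 < N := lt_of_le_of_ne (hno k0 hk0) (hcase k0 hk0)
        exact mul_lt_mul_of_pos_left h2 hpos
      have hsumlt : ∑ k, lam k * e k < ∑ k, lam k * N :=
        Finset.sum_lt_sum (fun k _ => hlt k) ⟨k0, Finset.mem_univ k0, hstrict⟩
      rw [← Finset.sum_mul, hsum1, one_mul, hsumE] at hsumlt
      exact lt_irrefl _ hsumlt
    obtain ⟨i, hi0, hiN⟩ := hi
    obtain ⟨j, hj0, hjN⟩ := hj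
    have hij : i ≠ j := by
      intro h
      rw [h] at hiN
      exact absurd (hiN.trans hjN) (lt_irrefl _)
    -- intermediate value theorem
    set f : ℝ → ℝ := fun t => Real.cos t ^ 2 * e i + Real.sin t ^ 2 * e j
      + 2 * Real.cos t * Real.sin t * (G i j).re with hfdef
    have hcont : Continuous f := by fun_prop
    have hf0 : f 0 = e i := by simp [hfdef]
    have hfpi : f (Real.pi / 2) = e j := by simp [hfdef]
    have hNmem : N ∈ Set.Icc (f 0) (f (Real.pi / 2)) := by
      rw [hf0, hfpi]
      exact ⟨le_of_lt hiN, le_of_lt hjN⟩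
    obtain ⟨t, _, hft⟩ := intermediate_value_Icc
      (by positivity : (0:ℝ) ≤ Real.pi / 2) hcont.continuousOn hNmem
    set c := Real.cos t with hcdef
    set s := Real.sin t with hsdef
    have hcs : (c:ℂ)^2 + (s:ℂ)^2 = 1 := by
      have := Real.cos_sq_add_sin_sq t
      push_cast
      exact_mod_cast congrArg (Complex.ofReal) this
    set ψ : Fin d → ℂ := fun a => (c:ℂ) * U a i + (s:ℂ) * U a j with hψdef
    set φ : Fin d → ℂ := fun a => (s:ℂ) * U a i - (c:ℂ) * U a j with hφdef
    -- norm of ψ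
    have hnorm : ∑ a, Complex.normSq (ψ a) = 1 := by
      have h1 : ((∑ a, Complex.normSq (ψ a) : ℝ) : ℂ)
          = ∑ a, (starRingEnd ℂ) (ψ a) * ψ a := by
        push_cast
        refine Finset.sum_congr rfl fun a _ => ?_
        rw [Complex.normSq_eq_conj_mul_self]
      have h2 : ∑ a, (starRingEnd ℂ) (ψ a) * ψ a
          = (c:ℂ)^2 * (∑ a, (starRingEnd ℂ) (U a i) * U a i)
          + ((c:ℂ)*(s:ℂ)) * (∑ a, (starRingEnd ℂ) (U a i) * U a j)
          + ((s:ℂ)*(c:ℂ)) * (∑ a, (starRingEnd ℂ) (U a j) * U a i)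
          + (s:ℂ)^2 * (∑ a, (starRingEnd ℂ) (U a j) * U a j) := by
        simp only [hψdef, map_add, _root_.map_mul, Complex.conj_ofReal, Finset.mul_sum]
        rw [← Finset.sum_add_distrib, ← Finset.sum_add_distrib, ← Finset.sum_add_distrib]
        refine Finset.sum_congr rfl fun a _ => ?_
        ring
      rw [h2, hUcol i i, hUcol i j, hUcol j i, hUcol j j] at h1
      simp only [if_pos rfl, if_neg hij, if_neg (Ne.symm hij)] at h1
      have h3 : ((∑ a, Complex.normSq (ψ a) : ℝ) : ℂ) = 1 := by
        rw [h1]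
        push_cast
        linear_combination hcs
      exact_mod_cast h3
    -- constraint value of ψ
    have hcons : ∑ a, ∑ b, (starRingEnd ℂ) (ψ a) * H a b * ψ b = (N : ℂ) := by
      have h2 : ∑ a, ∑ b, (starRingEnd ℂ) (ψ a) * H a b * ψ b
          = (c:ℂ)^2 * G i i + ((c:ℂ)*(s:ℂ)) * G i j
          + ((s:ℂ)*(c:ℂ)) * G j i + (s:ℂ)^2 * G j j := by
        rw [hGapply i i, hGapply i j, hGapply j i, hGapply j j]
        simp only [hψdef, map_add, _root_.map_mul, Complex.conj_ofReal, Finset.mul_sum]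
        rw [← Finset.sum_add_distrib, ← Finset.sum_add_distrib, ← Finset.sum_add_distrib]
        refine Finset.sum_congr rfl fun a _ => ?_
        rw [← Finset.sum_add_distrib, ← Finset.sum_add_distrib, ← Finset.sum_add_distrib]
        refine Finset.sum_congr rfl fun b _ => ?_
        ring
      have hGji : G j i = (starRingEnd ℂ) (G i j) := by
        have h4 : (Gᴴ) j i = G j i := by rw [hGherm.eq]
        rw [← h4, Matrix.conjTranspose_apply, Complex.star_def]
      rw [h2, hGji, hGkk i, hGkk j]
      have hadd := Complex.add_conj (G i j)
      push_cast at hadd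
      have hftcs : c ^ 2 * e i + s ^ 2 * e j + 2 * c * s * (G i j).re = N := hft
      have hreal := congrArg Complex.ofReal hftcs
      push_cast at hreal
      linear_combination hreal + ((c:ℂ) * (s:ℂ)) * hadd
    -- the weight p
    set p := min (lam i) (lam j) with hpdef
    have hlami : 0 < lam i := lt_of_le_of_ne (hlam0 i) (Ne.symm hi0)
    have hlamj : 0 < lam j := lt_of_le_of_ne (hlam0 j) (Ne.symm hj0)
    have hp0 : 0 < p := lt_min hlami hlamj
    have hpi : p ≤ lam i := min_le_left _ _
    have hpj : p ≤ lam j := min_le_right _ _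
    have hp1 : p < 1 := by
      have h2 : lam i + lam j ≤ ∑ k, lam k := by
        have h3 := Finset.sum_le_sum_of_subset_of_nonneg (Finset.subset_univ ({i, j} : Finset (Fin d)))
          (fun k _ _ => hlam0 k)
        rwa [Finset.sum_pair hij] at h3
      rw [hsum1] at h2
      have := min_le_left (lam i) (lam j)
      have := min_le_right (lam i) (lam j)
      linarith
    -- positive semidefiniteness of the remainder
    have hMiMj : (p:ℂ) • Matrix.vecMulVec (fun a => U a i) (star (fun a => U a i))
        + (p:ℂ) • Matrix.vecMulVec (fun a => U a j) (star (fun a => U a j))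
        = (p:ℂ) • Matrix.vecMulVec ψ (star ψ) + (p:ℂ) • Matrix.vecMulVec φ (star φ) := by
      ext a b
      simp only [Matrix.add_apply, Matrix.smul_apply, Matrix.vecMulVec_apply, Pi.star_apply,
        hψdef, hφdef, Complex.star_def, map_add, map_sub, _root_.map_mul, Complex.conj_ofReal,
        smul_eq_mul]
      linear_combination (-(p:ℂ) * (U a i * (starRingEnd ℂ) (U b i)
        + U a j * (starRingEnd ℂ) (U b j))) * hcs
    have hsplit : ρstar - (p : ℂ) • Matrix.vecMulVec ψ (star ψ)
        = (∑ r, (((if r = i then lam r - p else if r = j then lam r - p else lam r : ℝ)) : ℂ) •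
          Matrix.vecMulVec (fun a => U a r) (star (fun a => U a r)))
          + (p:ℂ) • Matrix.vecMulVec φ (star φ) := by
      have h0 : ∀ k0 : Fin d, (∑ r, (if r = k0 then (p:ℂ) else 0) •
          Matrix.vecMulVec (fun a => U a r) (star (fun a => U a r)))
          = (p : ℂ) • Matrix.vecMulVec (fun a => U a k0) (star (fun a => U a k0)) := by
        intro k0
        have h00 : ∀ r, (if r = k0 then (p:ℂ) else 0) •
            Matrix.vecMulVec (fun a => U a r) (star (fun a => U a r))
            = if r = k0 then (p:ℂ) • Matrix.vecMulVec (fun a => U a r)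
              (star (fun a => U a r)) else 0 := fun r => by split_ifs <;> simp
        rw [Finset.sum_congr rfl fun r _ => h00 r, Finset.sum_ite_eq' Finset.univ k0]
        simp
      have hsum2 : ρstar
          = (∑ r, (((if r = i then lam r - p else if r = j then lam r - p else lam r : ℝ)) : ℂ) •
            Matrix.vecMulVec (fun a => U a r) (star (fun a => U a r)))
            + (p:ℂ) • Matrix.vecMulVec (fun a => U a i) (star (fun a => U a i))
            + (p:ℂ) • Matrix.vecMulVec (fun a => U a j) (star (fun a => U a j)) := by
        rw [hrep, ← h0 i, ← h0 j, ← Finset.sum_add_distrib, ← Finset.sum_add_distrib]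
        refine Finset.sum_congr rfl fun r _ => ?_
        rw [← add_smul, ← add_smul]
        congr 1
        split_ifs with h1 h2 h3
        · exact absurd (h1.symm.trans h2) hij
        · push_cast; ring
        · push_cast; ring
        · push_cast; ring
      rw [hsum2, add_assoc, hMiMj]
      abel
    have hPSD : (ρstar - (p : ℂ) • Matrix.vecMulVec ψ (star ψ)).PosSemidef := by
      rw [hsplit]
      refine Matrix.PosSemidef.add (psd_sum _ fun r => psd_smul (psd_outer _) ?_)
        (psd_smul (psd_outer φ) hp0.le)
      split_ifs with h1 h2
      · subst h1; linarith
      · subst h2; linarith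
      · exact hlam0 r
    exact ⟨ψ, hnorm, hcons, key ψ hnorm hcons p hp0 hp1 hPSD⟩
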